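/- Let α = 1 and 0 ≤ β < 1/2, and let (b_n) be a positive sequence with b_n ↑ ∞ satisfying b_n ≤ n^{1−2β}/ln n for all large n. Define α̂_n = μ̂_n / ln b_n. Then there exists N such that for all n ≥ N: P( |α̂_n − 1| ≥ 2√2/(n^β ln b_n) ) ≤ 2/n². -/

import Mathlib

open MeasureTheory ProbabilityTheory Filter Real Set
open scoped NNReal ENNReal

/-- `trunc b x = x · 1{x ≤ b}` : truncation of a value at level `b`. -/
noncomputable def trunc (b x : ℝ) : ℝ := if x ≤ b then x else 0

/-- Truncated sample mean `μ̂_n = n⁻¹ ∑_{k<n} X_k(b_n)`. -/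
noncomputable def truncSampleMean {Ω : Type*} (X : ℕ → Ω → ℝ) (b : ℕ → ℝ)
    (n : ℕ) (ω : Ω) : ℝ :=
  (∑ k ∈ Finset.range n, trunc (b n) (X k ω)) / n

/-- `X` is a Pareto random variable with tail index `α`:
`X` is measurable and `P(X ≤ x) = 1 - x^{-α}` for all `x ≥ 1`. -/
def IsParetoRV {Ω : Type*} [MeasurableSpace Ω] (P : Measure Ω) (X : Ω → ℝ)
    (α : ℝ) : Prop :=
  Measurable X ∧ ∀ x : ℝ, 1 ≤ x → P {ω | X ω ≤ x} = ENNReal.ofReal (1 - x ^ (-α))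

section Aux

lemma measurable_trunc (b : ℝ) : Measurable (trunc b) :=
  Measurable.ite measurableSet_Iic measurable_id measurable_const

/-- The Pareto(1,1) density as a nonnegative real function. -/
noncomputable def pdens (x : ℝ) : ℝ≥0 :=
  Real.toNNReal (if 1 ≤ x then (x ^ 2)⁻¹ else 0)

lemma measurable_pdens : Measurable pdens :=
  (Measurable.ite measurableSet_Ici ((measurable_id.pow_const 2).inv)
    measurable_const).real_toNNReal

/-- The Pareto(1,1) law on ℝ. -/
noncomputable def pD : Measure ℝ :=
  volume.withDensity fun x => (pdens x : ℝ≥0∞)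

lemma pdens_coe (x : ℝ) :
    ((pdens x : ℝ≥0∞)) = ENNReal.ofReal (if 1 ≤ x then (x ^ 2)⁻¹ else 0) := rfl

lemma pD_Iic_of_lt {r : ℝ} (hr : r < 1) : pD (Iic r) = 0 := by
  rw [pD, withDensity_apply _ measurableSet_Iic]
  rw [setLIntegral_congr_fun measurableSet_Iic
    (fun x (hx : x ≤ r) => by
      rw [pdens_coe, if_neg (by linarith), ENNReal.ofReal_zero])]
  simp

lemma integrableOn_inv_sq {r : ℝ} (hr : 1 ≤ r) :
    IntegrableOn (fun x : ℝ => (x ^ 2)⁻¹) (Icc 1 r) := by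
  apply ContinuousOn.integrableOn_compact isCompact_Icc
  exact (continuous_pow 2).continuousOn.inv₀
    (fun x hx => pow_ne_zero _ (by rcases hx with ⟨h1, _⟩; positivity))

lemma intervalIntegral_inv_sq {r : ℝ} (hr : 1 ≤ r) :
    ∫ x in (1:ℝ)..r, (x ^ 2)⁻¹ = 1 - r⁻¹ := by
  have h0 : (0:ℝ) ∉ uIcc 1 r := by
    rw [Set.uIcc_of_le hr]; rintro ⟨h1, _⟩; linarith
  have h1 : ∫ x in (1:ℝ)..r, (x ^ 2)⁻¹ = ∫ x in (1:ℝ)..r, x ^ (-2:ℤ) :=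
    intervalIntegral.integral_congr (fun x _ => by
      rw [zpow_neg]; norm_cast)
  rw [h1, integral_zpow (Or.inr ⟨by norm_num, h0⟩)]
  norm_num
  ring

lemma pD_Iic_of_le {r : ℝ} (hr : 1 ≤ r) :
    pD (Iic r) = ENNReal.ofReal (1 - r⁻¹) := by
  rw [pD, withDensity_apply _ measurableSet_Iic]
  simp_rw [pdens_coe]
  have hD : EqOn (fun x : ℝ => if 1 ≤ x then (x ^ 2)⁻¹ else 0)
      ((Icc 1 r).indicator fun x => (x ^ 2)⁻¹) (Iic r) := by
    intro x (hx : x ≤ r)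
    by_cases h1 : 1 ≤ x
    · simp [Set.indicator_of_mem (Set.mem_Icc.2 ⟨h1, hx⟩), if_pos h1]
    · simp [Set.indicator_of_notMem (fun hmem => h1 (Set.mem_Icc.1 hmem).1), if_neg h1]
  rw [setLIntegral_congr_fun measurableSet_Iic
    (fun x hx => congrArg ENNReal.ofReal (hD hx))]
  have hint : Integrable ((Icc 1 r).indicator fun x : ℝ => (x ^ 2)⁻¹)
      (volume.restrict (Iic r)) := by
    exact ((integrableOn_inv_sq hr).integrable_indicator measurableSet_Icc).integrableOn
  rw [← ofReal_integral_eq_lintegral_ofReal hint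
    (ae_of_all _ (fun x => by
      by_cases h : x ∈ Icc 1 r
      · simp only [Set.indicator_of_mem h]; positivity
      · simp [Set.indicator_of_notMem h]))]
  congr 1
  rw [MeasureTheory.setIntegral_indicator measurableSet_Icc]
  have : Iic r ∩ Icc 1 r = Icc 1 r := by
    apply Set.inter_eq_self_of_subset_right
    exact fun x hx => (Set.mem_Icc.1 hx).2
  rw [this, MeasureTheory.integral_Icc_eq_integral_Ioc,
    ← intervalIntegral.integral_of_le hr, intervalIntegral_inv_sq hr]

instance : IsProbabilityMeasure pD := by
  constructor
  have h1 : Filter.Tendsto (fun r : ℝ => pD (Iic r)) atTop (nhds (pD univ)) :=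
    tendsto_measure_Iic_atTop pD
  have h2 : Filter.Tendsto (fun r : ℝ => pD (Iic r)) atTop (nhds 1) := by
    have hto : Filter.Tendsto (fun r : ℝ => ENNReal.ofReal (1 - r⁻¹)) atTop (nhds 1) := by
      have h1 : Filter.Tendsto (fun r : ℝ => (1 - r⁻¹ : ℝ)) atTop (nhds 1) := by
        simpa using (tendsto_const_nhds (x := (1:ℝ)) (f := (atTop : Filter ℝ))).sub
          tendsto_inv_atTop_zero
      simpa [Function.comp_def] using (ENNReal.continuous_ofReal.tendsto 1).comp h1
    refine hto.congr' ?_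
    filter_upwards [eventually_ge_atTop (1:ℝ)] with r hr using (pD_Iic_of_le hr).symm
  exact tendsto_nhds_unique h1 h2

lemma pD_ae_one_le : ∀ᵐ x ∂pD, (1:ℝ) ≤ x := by
  rw [ae_iff]
  refine measure_mono_null (fun x hx => ?_) (by rw [pD_Iic_of_le le_rfl]; simp)
  simp only [Set.mem_setOf_eq, not_le] at hx
  exact le_of_lt hx

/-- Key computation: integral of `g ∘ trunc b` against the Pareto law. -/
lemma integral_trunc_pD {b : ℝ} (hb : 1 ≤ b) (g : ℝ → ℝ) (hg0 : g 0 = 0) :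
    ∫ x, g (trunc b x) ∂pD = ∫ x in (1:ℝ)..b, (x ^ 2)⁻¹ * g x := by
  rw [pD, integral_withDensity_eq_integral_smul measurable_pdens]
  have hfun : (fun x => pdens x • g (trunc b x)) =
      (Icc 1 b).indicator (fun x => (x ^ 2)⁻¹ * g x) := by
    funext x
    by_cases h1 : 1 ≤ x
    · by_cases h2 : x ≤ b
      · rw [Set.indicator_of_mem (Set.mem_Icc.2 ⟨h1, h2⟩)]
        simp only [NNReal.smul_def, smul_eq_mul]
        rw [trunc, if_pos h2, pdens, if_pos h1,
          Real.coe_toNNReal _ (by positivity)]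
      · rw [Set.indicator_of_notMem (fun hmem => h2 (Set.mem_Icc.1 hmem).2)]
        rw [trunc, if_neg h2, hg0, smul_zero]
    · rw [Set.indicator_of_notMem (fun hmem => h1 (Set.mem_Icc.1 hmem).1)]
      have : pdens x = 0 := by
        rw [pdens, if_neg h1]; simp
      rw [this, zero_smul]
  rw [hfun, MeasureTheory.integral_indicator measurableSet_Icc,
    MeasureTheory.integral_Icc_eq_integral_Ioc, ← intervalIntegral.integral_of_le hb]

lemma pD_trunc_id {b : ℝ} (hb : 1 ≤ b) : ∫ x, trunc b x ∂pD = Real.log b := by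
  rw [integral_trunc_pD hb (fun x => x) rfl]
  have h0 : (0:ℝ) ∉ uIcc 1 b := by
    rw [Set.uIcc_of_le hb]; rintro ⟨h1, _⟩; linarith
  rw [intervalIntegral.integral_congr (g := fun x : ℝ => x⁻¹)
    (fun x hx => by
      rw [Set.uIcc_of_le hb] at hx
      have hx1 : (1:ℝ) ≤ x := hx.1
      have : x ≠ 0 := by positivity
      field_simp)]
  rw [integral_inv h0, div_one]

lemma pD_trunc_sq {b : ℝ} (hb : 1 ≤ b) : ∫ x, (trunc b x) ^ 2 ∂pD = b - 1 := by
  rw [integral_trunc_pD hb (fun x => x ^ 2) (by norm_num)]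
  rw [intervalIntegral.integral_congr (g := fun _ : ℝ => (1:ℝ))
    (fun x hx => by
      rw [Set.uIcc_of_le hb] at hx
      have hx1 : (1:ℝ) ≤ x := hx.1
      have : x ≠ 0 := by positivity
      field_simp)]
  simp

lemma exp_le_quad {x : ℝ} (hx : |x| ≤ 1) :
    Real.exp x ≤ 1 + x + (13/18) * x ^ 2 := by
  have h := Real.exp_bound hx (n := 3) (by norm_num)
  have hsum : ∑ m ∈ Finset.range 3, x ^ m / m.factorial = 1 + x + x ^ 2 / 2 := by
    norm_num [Finset.sum_range_succ]
  rw [hsum] at h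
  have h3 : |x| ^ 3 * ((3:ℕ).succ / ((3:ℕ).factorial * 3)) ≤ (2/9) * x ^ 2 := by
    have : ((3:ℕ).succ / ((3:ℕ).factorial * 3) : ℝ) = 2/9 := by norm_num [Nat.factorial]
    rw [this]
    have h1 : |x| ^ 3 = |x| ^ 2 * |x| := by ring
    have h2 : |x| ^ 2 = x ^ 2 := sq_abs x
    nlinarith [sq_nonneg x, abs_nonneg x]
  have := (abs_sub_le_iff.1 h).1
  nlinarith [sq_nonneg x]

/-- mgf-type bound for the truncated Pareto variable under the Pareto law. -/
lemma pD_exp_trunc_le {b : ℝ} (hb : 1 ≤ b) {s : ℝ} (hs : |s| * b ≤ 1) :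
    ∫ x, Real.exp (s * trunc b x) ∂pD ≤
      1 + s * Real.log b + (13/18) * s ^ 2 * b := by
  have htr_bound : ∀ x : ℝ, 1 ≤ x → 0 ≤ trunc b x ∧ trunc b x ≤ b := by
    intro x hx
    rw [trunc]
    split_ifs with h
    · exact ⟨by linarith, h⟩
    · exact ⟨le_rfl, by linarith⟩
  have hint : Integrable (fun x => Real.exp (s * trunc b x)) pD := by
    apply Integrable.mono' (integrable_const (Real.exp 1))
    · exact (((measurable_trunc b).const_mul s).exp).aestronglyMeasurable
    · filter_upwards [pD_ae_one_le] with x hx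
      rw [Real.norm_eq_abs, abs_of_pos (Real.exp_pos _)]
      apply Real.exp_le_exp.2
      obtain ⟨h0, hble⟩ := htr_bound x hx
      calc s * trunc b x ≤ |s * trunc b x| := le_abs_self _
        _ = |s| * trunc b x := by rw [abs_mul, abs_of_nonneg h0]
        _ ≤ |s| * b := by
            apply mul_le_mul_of_nonneg_left hble (abs_nonneg s)
        _ ≤ 1 := hs
  have hsplit : ∫ x, Real.exp (s * trunc b x) ∂pD =
      (∫ x, (Real.exp (s * trunc b x) - 1) ∂pD) + 1 := by
    rw [integral_sub hint (integrable_const 1)]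
    simp
  rw [hsplit]
  have hkey : ∫ x, (Real.exp (s * trunc b x) - 1) ∂pD ≤
      s * Real.log b + (13/18) * s ^ 2 * b := by
    have := integral_trunc_pD hb (fun y => Real.exp (s * y) - 1) (by simp)
    rw [this]
    have hcont1 : ContinuousOn (fun x : ℝ => (x ^ 2)⁻¹ * (Real.exp (s * x) - 1))
        (uIcc 1 b) := by
      rw [Set.uIcc_of_le hb]
      apply ContinuousOn.mul
      · exact (continuous_pow 2).continuousOn.inv₀
          (fun x hx => pow_ne_zero _ (by have := hx.1; positivity))
      · exact (((continuous_const.mul continuous_id).rexp).sub continuous_const).continuousOn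
    have hcont2 : ContinuousOn (fun x : ℝ => (x ^ 2)⁻¹ * (s * x + (13/18) * s ^ 2 * x ^ 2))
        (uIcc 1 b) := by
      rw [Set.uIcc_of_le hb]
      apply ContinuousOn.mul
      · exact (continuous_pow 2).continuousOn.inv₀
          (fun x hx => pow_ne_zero _ (by have := hx.1; positivity))
      · exact ((continuous_const.mul continuous_id).add
          (continuous_const.mul (continuous_pow 2))).continuousOn
    have hmono : ∫ x in (1:ℝ)..b, (x ^ 2)⁻¹ * (Real.exp (s * x) - 1) ≤
        ∫ x in (1:ℝ)..b, (x ^ 2)⁻¹ * (s * x + (13/18) * s ^ 2 * x ^ 2) := by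
      apply intervalIntegral.integral_mono_on hb
        (hcont1.intervalIntegrable) (hcont2.intervalIntegrable)
      intro x hx
      obtain ⟨hx1, hxb⟩ := hx
      have hxpos : (0:ℝ) < x := by linarith
      apply mul_le_mul_of_nonneg_left _ (by positivity)
      have habs : |s * x| ≤ 1 := by
        rw [abs_mul, abs_of_pos hxpos]
        calc |s| * x ≤ |s| * b := by
              apply mul_le_mul_of_nonneg_left hxb (abs_nonneg s)
          _ ≤ 1 := hs
      have := exp_le_quad habs
      have hxx : (s * x) ^ 2 = s ^ 2 * x ^ 2 := by ring
      nlinarith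
    have hcomp : ∫ x in (1:ℝ)..b, (x ^ 2)⁻¹ * (s * x + (13/18) * s ^ 2 * x ^ 2) =
        s * Real.log b + (13/18) * s ^ 2 * (b - 1) := by
      have h0 : (0:ℝ) ∉ uIcc 1 b := by
        rw [Set.uIcc_of_le hb]; rintro ⟨h1, _⟩; linarith
      rw [intervalIntegral.integral_congr
        (g := fun x : ℝ => s * x⁻¹ + (13/18) * s ^ 2 * 1)
        (fun x hx => by
          rw [Set.uIcc_of_le hb] at hx
          have hx1 : (1:ℝ) ≤ x := hx.1
          have hne : x ≠ 0 := by positivity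
          field_simp)]
      have hii1 : IntervalIntegrable (fun x : ℝ => s * x⁻¹) volume 1 b := by
        apply ContinuousOn.intervalIntegrable
        exact continuousOn_const.mul (continuousOn_inv₀.mono (fun x hx => by
          rw [Set.uIcc_of_le hb] at hx
          have := hx.1
          simp only [Set.mem_compl_iff, Set.mem_singleton_iff]
          intro h; rw [h] at this; linarith))
      rw [intervalIntegral.integral_add hii1 intervalIntegrable_const,
        intervalIntegral.integral_const_mul, integral_inv h0, div_one,
        intervalIntegral.integral_const]
      simp only [smul_eq_mul]
      ring
    calc ∫ x in (1:ℝ)..b, (x ^ 2)⁻¹ * (Real.exp (s * x) - 1)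
        ≤ ∫ x in (1:ℝ)..b, (x ^ 2)⁻¹ * (s * x + (13/18) * s ^ 2 * x ^ 2) := hmono
      _ = s * Real.log b + (13/18) * s ^ 2 * (b - 1) := hcomp
      _ ≤ s * Real.log b + (13/18) * s ^ 2 * b := by nlinarith [sq_nonneg s]
  linarith

end Aux

set_option maxHeartbeats 2000000 in
theorem truncEstimator_alphaOne_concentration {Ω : Type*} [MeasurableSpace Ω]
    (P : Measure Ω) [IsProbabilityMeasure P]
    (β : ℝ) (hβ0 : 0 ≤ β) (hβ : β < 1 / 2)
    (X : ℕ → Ω → ℝ)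
    (hiid : iIndepFun X P)
    (hPar : ∀ k, IsParetoRV P (X k) 1)
    (b : ℕ → ℝ) (hbpos : ∀ n, 0 < b n) (hbmono : Monotone b)
    (hbtop : Tendsto b atTop atTop)
    (hgrowth : ∀ᶠ n : ℕ in atTop,
      b n ≤ (n : ℝ) ^ (1 - 2 * β) / Real.log n) :
    ∃ N : ℕ, ∀ n ≥ N,
      P {ω | 2 * Real.sqrt 2 / ((n : ℝ) ^ β * Real.log (b n)) ≤
          |truncSampleMean X b n ω / Real.log (b n) - 1|} ≤
        ENNReal.ofReal (2 / (n : ℝ) ^ 2) := by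
  classical
  have hXmeas : ∀ k, Measurable (X k) := fun k => (hPar k).1
  -- identification of the law of each X k with the Pareto law pD
  have hmap : ∀ k, P.map (X k) = pD := by
    intro k
    have : IsProbabilityMeasure (P.map (X k)) :=
      Measure.isProbabilityMeasure_map (hXmeas k).aemeasurable
    refine MeasureTheory.Measure.ext_of_Iic (P.map (X k)) pD (fun r => ?_)
    rw [Measure.map_apply (hXmeas k) measurableSet_Iic]
    have hpre : X k ⁻¹' Iic r = {ω | X k ω ≤ r} := rfl
    rcases le_or_gt 1 r with hr | hr
    · rw [hpre, (hPar k).2 r hr, pD_Iic_of_le hr]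
      congr 1
      rw [Real.rpow_neg_one]
    · rw [pD_Iic_of_lt hr]
      have h0 : P {ω | X k ω ≤ 1} = 0 := by
        rw [(hPar k).2 1 le_rfl]
        norm_num
      refine le_antisymm ?_ zero_le
      rw [hpre, ← h0]
      exact measure_mono (fun ω hω => le_trans hω hr.le)
  have hae : ∀ k, ∀ᵐ ω ∂P, 1 < X k ω := by
    intro k
    have h0 : P {ω | X k ω ≤ 1} = 0 := by
      rw [(hPar k).2 1 le_rfl]; norm_num
    rw [ae_iff]
    simpa only [not_lt] using h0
  obtain ⟨N₁, hN₁⟩ := Filter.eventually_atTop.1 hgrowth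
  obtain ⟨N₂, hN₂⟩ := Filter.eventually_atTop.1 (hbtop.eventually_ge_atTop (2:ℝ))
  refine ⟨max (max N₁ N₂) 2, fun n hn => ?_⟩
  have hnN1 : N₁ ≤ n := le_trans (le_trans (le_max_left _ _) (le_max_left _ _)) hn
  have hnN2 : N₂ ≤ n := le_trans (le_trans (le_max_right _ _) (le_max_left _ _)) hn
  have hn2 : 2 ≤ n := le_trans (le_max_right _ _) hn
  have hgr := hN₁ n hnN1
  have hb2 : (2:ℝ) ≤ b n := hN₂ n hnN2
  have hb1 : (1:ℝ) ≤ b n := by linarith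
  have hnR2 : (2:ℝ) ≤ (n:ℝ) := by exact_mod_cast hn2
  have hnpos : (0:ℝ) < n := by linarith
  have hn1 : (1:ℝ) ≤ n := by linarith
  have hlogn : 0 < Real.log n := Real.log_pos (by linarith)
  set L := Real.log (b n) with hLdef
  have hL : 0 < L := Real.log_pos (by linarith)
  have hLne : L ≠ 0 := ne_of_gt hL
  set q : ℝ := (n:ℝ) ^ β with hqdef
  have hq1 : 1 ≤ q := Real.one_le_rpow hn1 hβ0
  have hqpos : 0 < q := by linarith
  set t : ℝ := 2 * Real.sqrt 2 / q with htdef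
  have hsqrt2 : Real.sqrt 2 * Real.sqrt 2 = 2 := Real.mul_self_sqrt (by norm_num)
  have hsqrt2pos : 0 < Real.sqrt 2 := Real.sqrt_pos.2 (by norm_num)
  have ht : 0 < t := div_pos (by positivity) hqpos
  set s : ℝ := (q * b n)⁻¹ with hsdef
  have hs0 : 0 < s := by
    rw [hsdef]; positivity
  have hsabs : |s| * b n ≤ 1 := by
    rw [abs_of_pos hs0, hsdef, mul_inv]
    rw [mul_assoc, inv_mul_cancel₀ (by linarith : b n ≠ 0), mul_one]
    exact inv_le_one_of_one_le₀ hq1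
  -- the truncated variables
  set Y : ℕ → Ω → ℝ := fun k ω => trunc (b n) (X k ω) with hYdef
  set S : Ω → ℝ := ∑ k ∈ Finset.range n, Y k with hSdef
  have hYmeas : ∀ k, Measurable (Y k) := fun k => (measurable_trunc _).comp (hXmeas k)
  have hYindep : iIndepFun Y P :=
    hiid.comp (fun _ => trunc (b n)) (fun _ => measurable_trunc (b n))
  have hSapp : ∀ ω, S ω = ∑ k ∈ Finset.range n, Y k ω := by
    intro ω; rw [hSdef]; exact Finset.sum_apply ω _ _
  have hSmeas : Measurable S := by
    have h := Finset.measurable_sum (Finset.range n) (fun k (_ : k ∈ Finset.range n) => hYmeas k)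
    have he : S = fun ω => ∑ k ∈ Finset.range n, Y k ω := funext hSapp
    rw [he]; exact h
  have haeY : ∀ᵐ ω ∂P, ∀ k, 0 ≤ Y k ω ∧ Y k ω ≤ b n := by
    rw [ae_all_iff]
    intro k
    filter_upwards [hae k] with ω hω
    rw [hYdef]
    simp only [trunc]
    split_ifs with h
    · exact ⟨by linarith, h⟩
    · exact ⟨le_rfl, by linarith⟩
  have haeS : ∀ᵐ ω ∂P, 0 ≤ S ω ∧ S ω ≤ n * b n := by
    filter_upwards [haeY] with ω hω
    rw [hSapp ω]
    constructor
    · exact Finset.sum_nonneg (fun k _ => (hω k).1)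
    · calc ∑ k ∈ Finset.range n, Y k ω ≤ ∑ _k ∈ Finset.range n, b n :=
          Finset.sum_le_sum (fun k _ => (hω k).2)
        _ = n * b n := by rw [Finset.sum_const, Finset.card_range, nsmul_eq_mul]
  have hint : ∀ u : ℝ, Integrable (fun ω => Real.exp (u * S ω)) P := by
    intro u
    apply Integrable.mono' (integrable_const (Real.exp (|u| * ((n:ℝ) * b n))))
    · exact ((hSmeas.const_mul u).exp).aestronglyMeasurable
    · filter_upwards [haeS] with ω hω
      obtain ⟨h0, h1⟩ := hω
      rw [Real.norm_eq_abs, abs_of_pos (Real.exp_pos _)]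
      apply Real.exp_le_exp.2
      calc u * S ω ≤ |u * S ω| := le_abs_self _
        _ = |u| * S ω := by rw [abs_mul, abs_of_nonneg h0]
        _ ≤ |u| * ((n:ℝ) * b n) := mul_le_mul_of_nonneg_left h1 (abs_nonneg u)
  -- mgf bounds
  have hmgfY : ∀ u : ℝ, |u| * b n ≤ 1 → ∀ k,
      mgf (Y k) P u ≤ Real.exp (u * L + (13/18) * u ^ 2 * b n) := by
    intro u hu k
    have h1 : mgf (Y k) P u = ∫ x, Real.exp (u * trunc (b n) x) ∂pD := by
      rw [mgf, ← hmap k,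
        MeasureTheory.integral_map (hXmeas k).aemeasurable
          (((measurable_trunc _).const_mul u).exp).aestronglyMeasurable]
    rw [h1]
    refine le_trans (pD_exp_trunc_le hb1 hu) ?_
    have h2 := Real.add_one_le_exp (u * Real.log (b n) + (13/18) * u ^ 2 * b n)
    have hLL : u * L + (13/18) * u ^ 2 * b n =
        u * Real.log (b n) + (13/18) * u ^ 2 * b n := by rw [hLdef]
    rw [hLL]
    linarith
  have hmgfS : ∀ u : ℝ, |u| * b n ≤ 1 →
      mgf S P u ≤ Real.exp ((n:ℝ) * (u * L + (13/18) * u ^ 2 * b n)) := by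
    intro u hu
    calc mgf S P u = ∏ k ∈ Finset.range n, mgf (Y k) P u := by
          rw [hSdef]; exact hYindep.mgf_sum hYmeas _
      _ ≤ ∏ _k ∈ Finset.range n, Real.exp (u * L + (13/18) * u ^ 2 * b n) :=
          Finset.prod_le_prod (fun k _ => mgf_nonneg) (fun k _ => hmgfY u hu k)
      _ = Real.exp ((n:ℝ) * (u * L + (13/18) * u ^ 2 * b n)) := by
          rw [Finset.prod_const, Finset.card_range, ← Real.exp_nat_mul]
  -- the exponent bound
  have hq2 : ((n:ℝ)) ^ ((1:ℝ) - 2 * β) = (n:ℝ) / q ^ 2 := by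
    rw [Real.rpow_sub hnpos, Real.rpow_one]
    congr 1
    rw [hqdef, ← Real.rpow_natCast ((n:ℝ) ^ β) 2, ← Real.rpow_mul hnpos.le]
    norm_num [mul_comm]
  have hA : Real.log n ≤ (n:ℝ) / (q ^ 2 * b n) := by
    rw [hq2] at hgr
    rw [le_div_iff₀ (by positivity)]
    have h1 : b n * Real.log n ≤ (n:ℝ) / q ^ 2 := by
      rw [le_div_iff₀ hlogn] at hgr
      linarith
    have h2 : Real.log (↑n) * (q ^ 2 * b n) = (b n * Real.log n) * q ^ 2 := by ring
    rw [h2]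
    calc (b n * Real.log n) * q ^ 2 ≤ ((n:ℝ) / q ^ 2) * q ^ 2 :=
        mul_le_mul_of_nonneg_right h1 (by positivity)
      _ = (n:ℝ) := by field_simp
  have hsqrt49 : (49/36 : ℝ) < Real.sqrt 2 := by
    rw [show (2:ℝ) = (2:ℝ) from rfl]
    exact (Real.lt_sqrt (by norm_num)).2 (by norm_num)
  set Eb : ℝ := -(s * ((n:ℝ) * t)) + (13/18) * (n:ℝ) * s ^ 2 * b n with hEbdef
  have hEb_eq : Eb = -(2 * Real.sqrt 2) * ((n:ℝ) / (q ^ 2 * b n))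
      + (13/18) * ((n:ℝ) / (q ^ 2 * b n)) := by
    rw [hEbdef, htdef, hsdef]
    have hbne : b n ≠ 0 := by linarith
    have hqne : q ≠ 0 := ne_of_gt hqpos
    field_simp
  have hEb_le : Eb ≤ -2 * Real.log n := by
    rw [hEb_eq]
    have hApos : 0 < (n:ℝ) / (q ^ 2 * b n) := by positivity
    have hcoef : (2:ℝ) + 13/18 ≤ 2 * Real.sqrt 2 := by nlinarith
    nlinarith [hA, hApos, hlogn]
  have hexpEb : Real.exp Eb ≤ 1 / (n:ℝ) ^ 2 := by
    calc Real.exp Eb ≤ Real.exp (-2 * Real.log n) := Real.exp_le_exp.2 hEb_le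
      _ = 1 / (n:ℝ) ^ 2 := by
          rw [show (-2:ℝ) * Real.log n = -(Real.log ((n:ℝ) ^ 2)) by
            rw [Real.log_pow]; push_cast; ring]
          rw [Real.exp_neg, Real.exp_log (by positivity), one_div]
  -- Chernoff bounds
  have hup : (P {ω | (n:ℝ) * L + (n:ℝ) * t ≤ S ω}).toReal ≤ 1 / (n:ℝ) ^ 2 := by
    have h1 := measure_ge_le_exp_mul_mgf (μ := P) (X := S) ((n:ℝ) * L + (n:ℝ) * t)
      hs0.le (hint s)
    have h2 : Real.exp (-s * ((n:ℝ) * L + (n:ℝ) * t)) * mgf S P s ≤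
        Real.exp (-s * ((n:ℝ) * L + (n:ℝ) * t)) *
          Real.exp ((n:ℝ) * (s * L + (13/18) * s ^ 2 * b n)) :=
      mul_le_mul_of_nonneg_left (hmgfS s hsabs) (Real.exp_pos _).le
    have h3 : Real.exp (-s * ((n:ℝ) * L + (n:ℝ) * t)) *
        Real.exp ((n:ℝ) * (s * L + (13/18) * s ^ 2 * b n)) = Real.exp Eb := by
      rw [← Real.exp_add, hEbdef]
      congr 1
      ring
    calc (P {ω | (n:ℝ) * L + (n:ℝ) * t ≤ S ω}).toReal
        ≤ Real.exp (-s * ((n:ℝ) * L + (n:ℝ) * t)) * mgf S P s := h1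
      _ ≤ Real.exp Eb := by rw [← h3]; exact h2
      _ ≤ 1 / (n:ℝ) ^ 2 := hexpEb
  have hdown : (P {ω | S ω ≤ (n:ℝ) * L - (n:ℝ) * t}).toReal ≤ 1 / (n:ℝ) ^ 2 := by
    have hnegabs : |(-s)| * b n ≤ 1 := by rwa [abs_neg]
    have h1 := measure_le_le_exp_mul_mgf (μ := P) (X := S) ((n:ℝ) * L - (n:ℝ) * t)
      (neg_nonpos.2 hs0.le) (hint (-s))
    have h2 : Real.exp (-(-s) * ((n:ℝ) * L - (n:ℝ) * t)) * mgf S P (-s) ≤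
        Real.exp (-(-s) * ((n:ℝ) * L - (n:ℝ) * t)) *
          Real.exp ((n:ℝ) * ((-s) * L + (13/18) * (-s) ^ 2 * b n)) :=
      mul_le_mul_of_nonneg_left (hmgfS (-s) hnegabs) (Real.exp_pos _).le
    have h3 : Real.exp (-(-s) * ((n:ℝ) * L - (n:ℝ) * t)) *
        Real.exp ((n:ℝ) * ((-s) * L + (13/18) * (-s) ^ 2 * b n)) = Real.exp Eb := by
      rw [← Real.exp_add, hEbdef]
      congr 1
      ring
    calc (P {ω | S ω ≤ (n:ℝ) * L - (n:ℝ) * t}).toReal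
        ≤ Real.exp (-(-s) * ((n:ℝ) * L - (n:ℝ) * t)) * mgf S P (-s) := h1
      _ ≤ Real.exp Eb := by rw [← h3]; exact h2
      _ ≤ 1 / (n:ℝ) ^ 2 := hexpEb
  -- event inclusion
  have hsub : {ω | 2 * Real.sqrt 2 / ((n : ℝ) ^ β * L) ≤
        |truncSampleMean X b n ω / L - 1|} ⊆
      {ω | (n:ℝ) * L + (n:ℝ) * t ≤ S ω} ∪ {ω | S ω ≤ (n:ℝ) * L - (n:ℝ) * t} := by
    intro ω hω
    simp only [Set.mem_setOf_eq] at hω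
    have hm : truncSampleMean X b n ω = S ω / n := by
      rw [truncSampleMean, hSapp ω]
    have h1 : 2 * Real.sqrt 2 / ((n:ℝ) ^ β * L) = t / L := by
      rw [htdef, hqdef, div_div]
    rw [h1, hm] at hω
    have h2 : |S ω / n / L - 1| = |S ω / n - L| / L := by
      rw [show S ω / n / L - 1 = (S ω / n - L) / L by field_simp, abs_div, abs_of_pos hL]
    rw [h2] at hω
    have habs : t ≤ |S ω / n - L| := by
      have := mul_le_mul_of_nonneg_right hω hL.le
      rwa [div_mul_cancel₀ _ hLne, div_mul_cancel₀ _ hLne] at this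
    rcases le_abs.1 habs with hcase | hcase
    · left
      have h4 : L + t ≤ S ω / n := by linarith
      have h5 := (le_div_iff₀ hnpos).1 h4
      simp only [Set.mem_setOf_eq]
      nlinarith
    · right
      have h4 : S ω / n ≤ L - t := by linarith
      have h5 := (div_le_iff₀ hnpos).1 h4
      simp only [Set.mem_setOf_eq]
      nlinarith
  -- conclusion
  have hPb1 : P {ω | (n:ℝ) * L + (n:ℝ) * t ≤ S ω} ≤ ENNReal.ofReal (1 / (n:ℝ) ^ 2) := by
    rw [← ENNReal.ofReal_toReal (measure_ne_top P _)]
    exact ENNReal.ofReal_le_ofReal hup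
  have hPb2 : P {ω | S ω ≤ (n:ℝ) * L - (n:ℝ) * t} ≤ ENNReal.ofReal (1 / (n:ℝ) ^ 2) := by
    rw [← ENNReal.ofReal_toReal (measure_ne_top P _)]
    exact ENNReal.ofReal_le_ofReal hdown
  calc P {ω | 2 * Real.sqrt 2 / ((n : ℝ) ^ β * L) ≤ |truncSampleMean X b n ω / L - 1|}
      ≤ P ({ω | (n:ℝ) * L + (n:ℝ) * t ≤ S ω} ∪ {ω | S ω ≤ (n:ℝ) * L - (n:ℝ) * t}) :=
        measure_mono hsub
    _ ≤ P {ω | (n:ℝ) * L + (n:ℝ) * t ≤ S ω} + P {ω | S ω ≤ (n:ℝ) * L - (n:ℝ) * t} :=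
        measure_union_le _ _
    _ ≤ ENNReal.ofReal (1 / (n:ℝ) ^ 2) + ENNReal.ofReal (1 / (n:ℝ) ^ 2) :=
        add_le_add hPb1 hPb2
    _ = ENNReal.ofReal (2 / (n:ℝ) ^ 2) := by
        rw [← ENNReal.ofReal_add (by positivity) (by positivity)]
        congr 1
        ring
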